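/- Let k and l be non-zero integers. There exist a torsion-free group G (written multiplicatively) and a subset X of G with |X| = 2 such that |X^{·k} X^{·l}| < 3|X| − 2, i.e., |X^{·k} X^{·l}| ≤ 3. -/

import Mathlib

structure KB where
  m : ℤ
  n : ℤ
deriving DecidableEq

namespace KB

@[ext] lemma ext' {a b : KB} (h1 : a.m = b.m) (h2 : a.n = b.n) : a = b := by
  cases a; cases b; simp_all

instance : One KB := ⟨⟨0, 0⟩⟩
instance : Mul KB := ⟨fun a b => ⟨a.m + ((-1 : ℤˣ) ^ a.n : ℤˣ) * b.m, a.n + b.n⟩⟩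
instance : Inv KB := ⟨fun a => ⟨-(((-1 : ℤˣ) ^ a.n : ℤˣ) * a.m), -a.n⟩⟩

@[simp] lemma mul_def (a b : KB) :
    a * b = ⟨a.m + ((-1 : ℤˣ) ^ a.n : ℤˣ) * b.m, a.n + b.n⟩ := rfl
@[simp] lemma one_def : (1 : KB) = ⟨0, 0⟩ := rfl
@[simp] lemma inv_def (a : KB) :
    a⁻¹ = ⟨-(((-1 : ℤˣ) ^ a.n : ℤˣ) * a.m), -a.n⟩ := rfl

instance : Group KB where
  mul_assoc a b c := by
    ext <;> simp [zpow_add] <;> ring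
  one_mul a := by ext <;> simp
  mul_one a := by ext <;> simp
  inv_mul_cancel a := by
    ext <;> simp [zpow_neg, Int.units_inv_eq_self]

lemma pow_n (g : KB) (j : ℕ) : (g ^ j).n = j * g.n := by
  induction j with
  | zero => simp
  | succ j ih => rw [pow_succ]; simp [ih]; ring

lemma pow_m_of_n_zero (g : KB) (h : g.n = 0) (j : ℕ) : (g ^ j).m = j * g.m := by
  induction j with
  | zero => simp
  | succ j ih =>
    rw [pow_succ]
    simp [pow_n, h, ih]
    ring

lemma torsionFree : ∀ g : KB, g ≠ 1 → ¬IsOfFinOrder g := by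
  intro g hg hfin
  obtain ⟨j, hj, hje⟩ := isOfFinOrder_iff_pow_eq_one.mp hfin
  have hn : (j : ℤ) * g.n = 0 := by
    have := congrArg KB.n hje
    simpa [pow_n] using this
  have hgn : g.n = 0 := by
    rcases mul_eq_zero.mp hn with h | h
    · exact absurd (by exact_mod_cast h) (by omega)
    · exact h
  have hm : (j : ℤ) * g.m = 0 := by
    have := congrArg KB.m hje
    simpa [pow_m_of_n_zero g hgn] using this
  have hgm : g.m = 0 := by
    rcases mul_eq_zero.mp hm with h | h
    · exact absurd (by exact_mod_cast h) (by omega)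
    · exact h
  exact hg (by ext <;> simp [hgm, hgn])

lemma zpow_mk_one (m : ℤ) (k : ℤ) :
    (⟨m, 1⟩ : KB) ^ k = ⟨if Odd k then m else 0, k⟩ := by
  induction k using Int.induction_on with
  | zero => simp
  | succ j ih =>
    rw [zpow_add_one, ih]
    rcases Int.even_or_odd (j : ℤ) with he | ho
    · have : Odd ((j : ℤ) + 1) := Even.add_one he
      simp [he.neg_one_zpow, Int.not_odd_iff_even.mpr he, this]
    · have h2 : ¬ Odd ((j : ℤ) + 1) := by simp [Int.not_odd_iff_even]; exact_mod_cast ho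
      have hoj : Odd j := by exact_mod_cast ho
      simp [ho, h2, hoj.neg_one_pow]
  | pred j ih =>
    rw [sub_eq_add_neg, zpow_add, ih, zpow_neg_one]
    rcases Int.even_or_odd (-(j : ℤ)) with he | ho
    · have h1 : Odd (-(j : ℤ) + -1) := by
        rcases he with ⟨r, hr⟩; exact ⟨r - 1, by omega⟩
      have hej : Even j := by
        have : Even ((j : ℤ)) := by rcases he with ⟨r, hr⟩; exact ⟨-r, by omega⟩
        exact_mod_cast this
      simp [Int.not_odd_iff_even.mpr he, h1, hej.neg_one_pow]
    · have h2 : ¬ Odd (-(j : ℤ) + -1) := by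
        simp [Int.not_odd_iff_even]; rcases ho with ⟨r, hr⟩; exact ⟨r, by omega⟩
      have hoj : Odd j := by
        have : Odd ((j : ℤ)) := by rcases ho with ⟨r, hr⟩; exact ⟨-r - 1, by omega⟩
        exact_mod_cast this
      simp [ho, h2, hoj.neg_one_pow]

lemma key_mem (k l ε δ : ℤ) (hε : ε = 0 ∨ ε = 1) (hδ : δ = 0 ∨ δ = 1) :
    (⟨ε, 1⟩ : KB) ^ k * (⟨δ, 1⟩ : KB) ^ l ∈
      ({⟨-1, k + l⟩, ⟨0, k + l⟩, ⟨1, k + l⟩} : Finset KB) := by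
  rw [zpow_mk_one, zpow_mk_one]
  simp only [Finset.mem_insert, Finset.mem_singleton, mul_def, KB.mk.injEq]
  rcases Int.even_or_odd k with hk' | hk' <;> rcases Int.even_or_odd l with hl' | hl' <;>
    [ (rw [if_neg (Int.not_odd_iff_even.mpr hk'), if_neg (Int.not_odd_iff_even.mpr hl')]);
      (rw [if_neg (Int.not_odd_iff_even.mpr hk'), if_pos hl']);
      (rw [if_pos hk', if_neg (Int.not_odd_iff_even.mpr hl')]);
      (rw [if_pos hk', if_pos hl']) ] <;>
    [ (have e3 : ((-1 : ℤˣ) ^ k : ℤˣ) = (1 : ℤˣ) := hk'.neg_one_zpow);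
      (have e3 : ((-1 : ℤˣ) ^ k : ℤˣ) = (1 : ℤˣ) := hk'.neg_one_zpow);
      (have e3 : ((-1 : ℤˣ) ^ k : ℤˣ) = (-1 : ℤˣ) := by
        obtain ⟨r, rfl⟩ := hk'
        rw [zpow_add, zpow_mul, zpow_two]
        simp);
      (have e3 : ((-1 : ℤˣ) ^ k : ℤˣ) = (-1 : ℤˣ) := by
        obtain ⟨r, rfl⟩ := hk'
        rw [zpow_add, zpow_mul, zpow_two]
        simp) ] <;>
    rw [e3] <;>
    simp only [Units.val_one, Units.val_neg] <;>
    rcases hε with rfl | rfl <;> rcases hδ with rfl | rfl <;> norm_num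

end KB

theorem exists_torsion_free_group_small_dilate_sum
    (k l : ℤ) (hk : k ≠ 0) (hl : l ≠ 0) :
    ∃ (G : Type) (_ : Group G) (_ : DecidableEq G),
      (∀ g : G, g ≠ 1 → ¬IsOfFinOrder g) ∧
      ∃ X : Finset G, X.card = 2 ∧
        (Finset.image₂ (fun x y => x ^ k * y ^ l) X X).card ≤ 3 := by
  refine ⟨KB, inferInstance, inferInstance, KB.torsionFree, {⟨0,1⟩, ⟨1,1⟩}, by decide, ?_⟩
  have hsub : (Finset.image₂ (fun x y => x ^ k * y ^ l) ({⟨0,1⟩, ⟨1,1⟩} : Finset KB)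
      ({⟨0,1⟩, ⟨1,1⟩} : Finset KB)) ⊆ ({⟨-1, k + l⟩, ⟨0, k + l⟩, ⟨1, k + l⟩} : Finset KB) := by
    intro z hz
    rw [Finset.mem_image₂] at hz
    obtain ⟨x, hx, y, hy, hz⟩ := hz
    rw [Finset.mem_insert, Finset.mem_singleton] at hx hy
    subst hz
    rcases hx with rfl | rfl <;> rcases hy with rfl | rfl
    · exact KB.key_mem k l 0 0 (Or.inl rfl) (Or.inl rfl)
    · exact KB.key_mem k l 0 1 (Or.inl rfl) (Or.inr rfl)
    · exact KB.key_mem k l 1 0 (Or.inr rfl) (Or.inl rfl)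
    · exact KB.key_mem k l 1 1 (Or.inr rfl) (Or.inr rfl)
  calc (Finset.image₂ (fun x y => x ^ k * y ^ l) ({⟨0,1⟩, ⟨1,1⟩} : Finset KB)
      ({⟨0,1⟩, ⟨1,1⟩} : Finset KB)).card
      ≤ ({⟨-1, k + l⟩, ⟨0, k + l⟩, ⟨1, k + l⟩} : Finset KB).card := Finset.card_le_card hsub
    _ ≤ 3 := by
        apply (Finset.card_insert_le _ _).trans
        apply Nat.succ_le_succ
        apply (Finset.card_insert_le _ _).trans
        apply Nat.succ_le_succ
        simp
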